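/- Let 0 < r < n and let r' = n mod r. The Jordan type of the nilpotent matrix N_r (i.e., the multiset of sizes of its Jordan blocks) is the partition of n consisting of r' parts equal to ⌈n/r⌉ and r − r' parts equal to ⌊n/r⌋. -/
import Mathlib

open scoped Matrix

/-- The n×n complex matrix with ones on the r-th subdiagonal. -/
def Nr (n r : ℕ) : Matrix (Fin n) (Fin n) ℂ :=
  Matrix.of fun i j => if (i : ℕ) = (j : ℕ) + r then 1 else 0

/-- The partition with `n % r` parts equal to `⌈n/r⌉` and `r - n % r` parts equal to `⌊n/r⌋`. -/
def muR (n r : ℕ) : Multiset ℕ :=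
  Multiset.replicate (n % r) (n / r + 1) + Multiset.replicate (r - n % r) (n / r)

/-- `A` is nilpotent with Jordan type `lam`: the number of Jordan blocks of size at least `k`
equals `rank A^(k-1) - rank A^k`. -/
def JordanType {n : ℕ} (A : Matrix (Fin n) (Fin n) ℂ) (lam : Multiset ℕ) : Prop :=
  IsNilpotent A ∧ (∀ x ∈ lam, 0 < x) ∧ lam.sum = n ∧
    ∀ k : ℕ, 1 ≤ k →
      (lam.filter (fun x => k ≤ x)).card = (A ^ (k - 1)).rank - (A ^ k).rank

/-- Sum of the `j` largest parts of `lam`. -/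
def dSum (lam : Multiset ℕ) (j : ℕ) : ℕ :=
  (((lam.sort (· ≤ ·)).reverse).take j).sum

/-- Dominance order on partitions (as multisets of parts). -/
def Dominates (lam mu : Multiset ℕ) : Prop :=
  lam.card ≤ mu.card ∧ ∀ j, dSum mu j ≤ dSum lam j

lemma Nr_mul (n a b : ℕ) : Nr n a * Nr n b = Nr n (a + b) := by
  ext i j
  simp only [Nr, Matrix.mul_apply, Matrix.of_apply]
  rcases lt_or_ge ((j : ℕ) + b) n with h | h
  · rw [Finset.sum_eq_single (⟨(j : ℕ) + b, h⟩ : Fin n)]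
    · have he : ((⟨(j : ℕ) + b, h⟩ : Fin n) : ℕ) = (j : ℕ) + b := rfl
      rw [he, if_pos rfl, mul_one]
      by_cases hi : (i : ℕ) = (j : ℕ) + (a + b)
      · rw [if_pos (by omega), if_pos hi]
      · rw [if_neg (by omega), if_neg hi]
    · intro l _ hl
      rw [if_neg (fun hc => hl (Fin.ext hc)), mul_zero]
    · intro hmem; exact absurd (Finset.mem_univ _) hmem
  · rw [Finset.sum_eq_zero fun l _ => by
      rw [if_neg (by omega : ¬ (l : ℕ) = (j : ℕ) + b), mul_zero]]
    rw [if_neg (by omega : ¬ (i : ℕ) = (j : ℕ) + (a + b))]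

lemma Nr_pow (n r k : ℕ) : Nr n r ^ k = Nr n (k * r) := by
  induction k with
  | zero =>
    ext i j
    simp [Nr, Matrix.one_apply, Fin.ext_iff, eq_comm]
  | succ k ih =>
    rw [pow_succ, ih, Nr_mul]
    ring_nf

lemma Nr_eq_zero (n m : ℕ) (h : n ≤ m) : Nr n m = 0 := by
  ext i j
  simp only [Nr, Matrix.of_apply, Matrix.zero_apply]
  rw [if_neg (by omega)]

open ComplexOrder in
lemma rank_Nr (n m : ℕ) : (Nr n m).rank = n - min n m := by
  have key : (Nr n m)ᴴ * (Nr n m)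
      = Matrix.diagonal (fun j : Fin n => if (j : ℕ) + m < n then (1 : ℂ) else 0) := by
    ext j j'
    simp only [Matrix.mul_apply, Matrix.conjTranspose_apply, Nr, Matrix.of_apply,
      Matrix.diagonal_apply, apply_ite (star : ℂ → ℂ), star_one, star_zero]
    rcases eq_or_ne j j' with rfl | hjj
    · rw [if_pos rfl]
      rcases lt_or_ge ((j : ℕ) + m) n with h | h
      · rw [if_pos h, Finset.sum_eq_single (⟨(j : ℕ) + m, h⟩ : Fin n)]
        · have he : ((⟨(j : ℕ) + m, h⟩ : Fin n) : ℕ) = (j : ℕ) + m := rfl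
          rw [he, if_pos rfl, mul_one]
        · intro l _ hl
          rw [if_neg (fun hc => hl (Fin.ext hc)), zero_mul]
        · intro hmem; exact absurd (Finset.mem_univ _) hmem
      · rw [if_neg (by omega), Finset.sum_eq_zero]
        intro l _
        rw [if_neg (by omega : ¬ (l : ℕ) = (j : ℕ) + m), zero_mul]
    · rw [if_neg hjj, Finset.sum_eq_zero]
      intro l _
      rcases eq_or_ne ((l : ℕ)) ((j : ℕ) + m) with h | h
      · rcases eq_or_ne ((l : ℕ)) ((j' : ℕ) + m) with h' | h'
        · exact absurd (Fin.ext (show (j : ℕ) = (j' : ℕ) by omega)) hjj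
        · rw [if_neg h', mul_zero]
      · rw [if_neg h, zero_mul]
  have hcard : Fintype.card {j : Fin n // (if (j : ℕ) + m < n then (1 : ℂ) else 0) ≠ 0}
      = n - min n m := by
    have : Fintype.card {j : Fin n // (if (j : ℕ) + m < n then (1 : ℂ) else 0) ≠ 0}
        = Fintype.card (Fin (n - m)) := by
      apply Fintype.card_congr
      refine ⟨fun j => ⟨(j.1 : ℕ), ?_⟩, fun i => ⟨⟨(i : ℕ), by omega⟩, ?_⟩, ?_, ?_⟩
      · have hj := j.2
        by_contra hc
        exact hj (by rw [if_neg (by omega)])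
      · have hi : (i : ℕ) + m < n := by omega
        simp [hi]
      · intro j; ext; simp
      · intro i; ext; simp
    rw [this, Fintype.card_fin]; omega
  rw [← Matrix.rank_conjTranspose_mul_self, key, Matrix.rank_diagonal, hcard]

lemma card_filter_replicate (c a k : ℕ) :
    (Multiset.filter (fun x => k ≤ x) (Multiset.replicate c a)).card
      = if k ≤ a then c else 0 := by
  split_ifs with h
  · rw [Multiset.filter_eq_self.mpr fun x hx => by
      rw [Multiset.eq_of_mem_replicate hx]; exact h, Multiset.card_replicate]
  · rw [Multiset.filter_eq_nil.mpr fun x hx => by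
      rw [Multiset.eq_of_mem_replicate hx]; exact h, Multiset.card_zero]

theorem jordanType_Nr (n r : ℕ) (hr : 0 < r) (hrn : r < n) (r' : ℕ) (hr' : r' = n % r) :
    JordanType (Nr n r) (muR n r) := by
  have hmod : n % r < r := Nat.mod_lt n hr
  have hdiv : n / r * r + n % r = n := Nat.div_add_mod' n r
  have hq : 1 ≤ n / r := Nat.one_le_div_iff hr |>.mpr hrn.le
  refine ⟨⟨n, ?_⟩, ?_, ?_, ?_⟩
  · rw [Nr_pow, Nr_eq_zero]
    exact Nat.le_mul_of_pos_right n hr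
  · intro x hx
    simp only [muR, Multiset.mem_add, Multiset.mem_replicate] at hx
    rcases hx with ⟨_, rfl⟩ | ⟨_, rfl⟩ <;> omega
  · simp only [muR, Multiset.sum_add, Multiset.sum_replicate, smul_eq_mul]
    have e1 : n % r * (n / r + 1) = n % r * (n / r) + n % r := by ring
    have e2 : (r - n % r) * (n / r) = r * (n / r) - n % r * (n / r) := Nat.sub_mul _ _ _
    have e3 : n % r * (n / r) ≤ r * (n / r) := Nat.mul_le_mul_right _ hmod.le
    have e4 : r * (n / r) = n / r * r := Nat.mul_comm _ _
    omega
  · intro k hk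
    rw [Nr_pow, Nr_pow, rank_Nr, rank_Nr]
    have hfilt : ((muR n r).filter (fun x => k ≤ x)).card
        = (if k ≤ n / r + 1 then n % r else 0) + (if k ≤ n / r then r - n % r else 0) := by
      simp only [muR, Multiset.filter_add, Multiset.card_add, card_filter_replicate]
    rw [hfilt]
    rcases le_or_gt k (n / r) with h1 | h1
    · rw [if_pos (by omega), if_pos h1]
      have h2 : k * r ≤ n / r * r := Nat.mul_le_mul_right _ h1
      have e1 : (k - 1) * r = k * r - 1 * r := Nat.sub_mul _ _ _
      have e2 : 1 * r ≤ k * r := Nat.mul_le_mul_right _ hk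
      have e3 : (1 : ℕ) * r = r := one_mul r
      rw [min_eq_right (by omega), min_eq_right (by omega)]
      omega
    · rcases eq_or_lt_of_le (Nat.succ_le_of_lt h1) with h2 | h2
      · -- k = n / r + 1
        rw [if_pos (by omega), if_neg (by omega)]
        have hk1 : k = n / r + 1 := h2.symm
        have e1 : k * r = n / r * r + r := by rw [hk1, add_mul, one_mul]
        have e2 : (k - 1) * r = n / r * r := by rw [show k - 1 = n / r by omega]
        rw [min_eq_right (by omega), min_eq_left (by omega)]
        omega
      · rw [if_neg (by omega), if_neg (by omega)]
        have e1 : (n / r + 1) * r = n / r * r + r := by rw [add_mul, one_mul]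
        have e2 : (n / r + 1) * r ≤ (k - 1) * r := Nat.mul_le_mul_right _ (by omega)
        have e3 : (k - 1) * r ≤ k * r := Nat.mul_le_mul_right _ (by omega)
        rw [min_eq_left (by omega), min_eq_left (by omega)]
        omega
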